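/- A graduable Lie algebra that is not stratifiable: let 𝔤 be a Lie algebra over ℝ with basis e₁, e₂, e₃, e₄, e₅ whose only nonvanishing brackets among basis vectors (up to antisymmetry) are [e₁,e₂] = e₃, [e₁,e₃] = e₄, [e₁,e₄] = e₅, and [e₂,e₃] = e₅. Then 𝔤 admits no stratification: there is no finite family of linear subspaces V₁, …, Vₛ of 𝔤 with s ≥ 1, Vₛ ≠ {0}, 𝔤 = V₁ ⊕ ⋯ ⊕ Vₛ (internal direct sum), span{[v,w] : v ∈ V₁, w ∈ Vⱼ} = V_{j+1} for all 1 ≤ j ≤ s−1, and span{[v,w] : v ∈ V₁, w ∈ Vₛ} = {0}. -/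

import Mathlib

/-- The span of all brackets `⁅v, w⁆` with `v ∈ A` and `w ∈ B`. -/
def bracketSpan {𝔤 : Type*} [LieRing 𝔤] [LieAlgebra ℝ 𝔤] (A B : Submodule ℝ 𝔤) :
    Submodule ℝ 𝔤 :=
  Submodule.span ℝ {x : 𝔤 | ∃ v ∈ A, ∃ w ∈ B, ⁅v, w⁆ = x}

theorem mem_bracketSpan' {𝔤 : Type*} [LieRing 𝔤] [LieAlgebra ℝ 𝔤] {A B : Submodule ℝ 𝔤}
    {v w : 𝔤} (hv : v ∈ A) (hw : w ∈ B) : ⁅v, w⁆ ∈ bracketSpan A B :=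
  Submodule.subset_span ⟨v, hv, w, hw, rfl⟩

/-- **A graduable Lie algebra that is not stratifiable:** the 5-dimensional Lie algebra
with basis `e₁, …, e₅` and nonvanishing brackets `[e₁,e₂] = e₃`, `[e₁,e₃] = e₄`,
`[e₁,e₄] = e₅`, `[e₂,e₃] = e₅` admits no stratification. -/
theorem not_stratifiable_dim5 (𝔤 : Type*) [LieRing 𝔤] [LieAlgebra ℝ 𝔤]
    (e : Module.Basis (Fin 5) ℝ 𝔤)
    (h12 : ⁅e 0, e 1⁆ = e 2) (h13 : ⁅e 0, e 2⁆ = e 3) (h14 : ⁅e 0, e 3⁆ = e 4)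
    (h23 : ⁅e 1, e 2⁆ = e 4)
    (h15 : ⁅e 0, e 4⁆ = 0) (h24 : ⁅e 1, e 3⁆ = 0) (h25 : ⁅e 1, e 4⁆ = 0)
    (h34 : ⁅e 2, e 3⁆ = 0) (h35 : ⁅e 2, e 4⁆ = 0) (h45 : ⁅e 3, e 4⁆ = 0) :
    ¬ ∃ (s : ℕ) (V : ℕ → Submodule ℝ 𝔤),
        1 ≤ s ∧
        V s ≠ ⊥ ∧
        V 0 = ⊥ ∧
        (∀ j, s < j → V j = ⊥) ∧
        DirectSum.IsInternal V ∧
        (∀ j, 1 ≤ j → bracketSpan (V 1) (V j) = V (j + 1)) := by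
  rintro ⟨s, V, hs, hVs, hV0, hVtop, hInt, hbr⟩
  -- skew-symmetric versions of the bracket relations
  have h21 : ⁅e 1, e 0⁆ = -e 2 := by rw [← lie_skew, h12]
  have h31 : ⁅e 2, e 0⁆ = -e 3 := by rw [← lie_skew, h13]
  have h41 : ⁅e 3, e 0⁆ = -e 4 := by rw [← lie_skew, h14]
  have h32 : ⁅e 2, e 1⁆ = -e 4 := by rw [← lie_skew, h23]
  have h51 : ⁅e 4, e 0⁆ = 0 := by rw [← lie_skew, h15, neg_zero]
  have h42 : ⁅e 3, e 1⁆ = 0 := by rw [← lie_skew, h24, neg_zero]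
  have h52 : ⁅e 4, e 1⁆ = 0 := by rw [← lie_skew, h25, neg_zero]
  have h43 : ⁅e 3, e 2⁆ = 0 := by rw [← lie_skew, h34, neg_zero]
  have h53 : ⁅e 4, e 2⁆ = 0 := by rw [← lie_skew, h35, neg_zero]
  have h54 : ⁅e 4, e 3⁆ = 0 := by rw [← lie_skew, h45, neg_zero]
  -- any bracket lies in W := span {e 2, e 3, e 4}
  set W : Submodule ℝ 𝔤 := Submodule.span ℝ ({e 2, e 3, e 4} : Set 𝔤) with hW
  have he2W : e 2 ∈ W := Submodule.subset_span (by simp)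
  have he3W : e 3 ∈ W := Submodule.subset_span (by simp)
  have he4W : e 4 ∈ W := Submodule.subset_span (by simp)
  have key : ∀ x y : 𝔤, ⁅x, y⁆ ∈ W := by
    intro x y
    set p := e.repr x with hp
    set q := e.repr y with hq
    have hxy : ⁅x, y⁆ = (p 0 * q 1 - p 1 * q 0) • e 2 + (p 0 * q 2 - p 2 * q 0) • e 3 +
        (p 0 * q 3 - p 3 * q 0 + (p 1 * q 2 - p 2 * q 1)) • e 4 := by
      conv_lhs => rw [← e.sum_repr x, ← e.sum_repr y]
      simp only [← hp, ← hq, Fin.sum_univ_five, add_lie, lie_add, smul_lie, lie_smul, lie_self,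
        h12, h13, h14, h23, h15, h24, h25, h34, h35, h45,
        h21, h31, h41, h32, h51, h42, h52, h43, h53, h54,
        smul_zero, smul_neg, add_zero, zero_add]
      try module
    rw [hxy]
    exact Submodule.add_mem _ (Submodule.add_mem _ (Submodule.smul_mem _ _ he2W)
      (Submodule.smul_mem _ _ he3W)) (Submodule.smul_mem _ _ he4W)
  -- every V j for j ≥ 2 lies in W, hence 𝔤 = V 1 ⊔ W
  have hVW : ∀ j, 2 ≤ j → V j ≤ W := by
    intro j hj
    obtain ⟨k, rfl⟩ : ∃ k, j = k + 1 := ⟨j - 1, by omega⟩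
    rw [← hbr k (by omega)]
    refine Submodule.span_le.mpr ?_
    rintro z ⟨v, -, w, -, rfl⟩
    exact key v w
  have hsup : V 1 ⊔ W = ⊤ := by
    rw [eq_top_iff, ← hInt.submodule_iSup_eq_top]
    refine iSup_le fun j => ?_
    match j, Nat.lt_or_ge j 2 with
    | 0, _ => rw [hV0]; exact bot_le
    | 1, _ => exact le_sup_left
    | (k+2), _ => exact le_trans (hVW (k+2) (by omega)) le_sup_right
  -- decompose e 0 and e 1
  have hmem0 : e 0 ∈ V 1 ⊔ W := hsup ▸ Submodule.mem_top
  have hmem1 : e 1 ∈ V 1 ⊔ W := hsup ▸ Submodule.mem_top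
  rw [Submodule.mem_sup] at hmem0 hmem1
  obtain ⟨x, hx, w, hw, hxw⟩ := hmem0
  obtain ⟨y, hy, w', hw', hyw⟩ := hmem1
  -- write w and w' in coordinates
  have hWco : ∀ z : 𝔤, z ∈ W → ∃ a b c : ℝ, z = a • e 2 + b • e 3 + c • e 4 := by
    intro z hz
    rw [hW, show ({e 2, e 3, e 4} : Set 𝔤) = insert (e 2) {e 3, e 4} from rfl,
      Submodule.mem_span_insert] at hz
    obtain ⟨a, z', hz', rfl⟩ := hz
    rw [Submodule.mem_span_pair] at hz'
    obtain ⟨b, c, rfl⟩ := hz'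
    exact ⟨a, b, c, by abel⟩
  obtain ⟨a2, a3, a4, hwco⟩ := hWco w hw
  obtain ⟨b2, b3, b4, hw'co⟩ := hWco w' hw'
  have hxe : x = e 0 - (a2 • e 2 + a3 • e 3 + a4 • e 4) := by rw [← hwco, ← hxw]; abel
  have hye : y = e 1 - (b2 • e 2 + b3 • e 3 + b4 • e 4) := by rw [← hw'co, ← hyw]; abel
  -- z = [x,y] ∈ V 2
  have hz2 : ⁅x, y⁆ ∈ V 2 := by
    have := mem_bracketSpan' (A := V 1) (B := V 1) hx hy
    rwa [hbr 1 le_rfl] at this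
  have hzval : ⁅x, y⁆ = e 2 - b2 • e 3 + (a2 - b3) • e 4 := by
    rw [hxe, hye]
    simp only [sub_lie, lie_sub, add_lie, lie_add, smul_lie, lie_smul, lie_self,
      h12, h13, h14, h23, h15, h24, h25, h34, h35, h45,
      h21, h31, h41, h32, h51, h42, h52, h43, h53, h54,
      smul_zero, smul_neg, add_zero, zero_add, sub_zero, zero_sub]
    try module
  -- u = [x,z], v = [y,z] ∈ V 3
  have hu3 : ⁅x, ⁅x, y⁆⁆ ∈ V 3 := by
    have := mem_bracketSpan' (A := V 1) (B := V 2) hx hz2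
    rwa [hbr 2 (by omega)] at this
  have hv3 : ⁅y, ⁅x, y⁆⁆ ∈ V 3 := by
    have := mem_bracketSpan' (A := V 1) (B := V 2) hy hz2
    rwa [hbr 2 (by omega)] at this
  have huval : ⁅x, ⁅x, y⁆⁆ = e 3 - b2 • e 4 := by
    rw [hzval, hxe]
    simp only [sub_lie, lie_sub, add_lie, lie_add, smul_lie, lie_smul, lie_self,
      h12, h13, h14, h23, h15, h24, h25, h34, h35, h45,
      h21, h31, h41, h32, h51, h42, h52, h43, h53, h54,
      smul_zero, smul_neg, add_zero, zero_add, sub_zero, zero_sub]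
    try module
  have hvval : ⁅y, ⁅x, y⁆⁆ = e 4 := by
    rw [hzval, hye]
    simp only [sub_lie, lie_sub, add_lie, lie_add, smul_lie, lie_smul, lie_self,
      h12, h13, h14, h23, h15, h24, h25, h34, h35, h45,
      h21, h31, h41, h32, h51, h42, h52, h43, h53, h54,
      smul_zero, smul_neg, add_zero, zero_add, sub_zero, zero_sub]
    try module
  -- hence e 4 ∈ V 3 and e 3 ∈ V 3
  have he4V3 : e 4 ∈ V 3 := hvval ▸ hv3
  have he3V3 : e 3 ∈ V 3 := by
    have : e 3 = ⁅x, ⁅x, y⁆⁆ + b2 • e 4 := by rw [huval]; abel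
    rw [this]
    exact Submodule.add_mem _ hu3 (Submodule.smul_mem _ _ he4V3)
  -- [x, e 3] = e 4 ∈ V 4
  have he4V4 : e 4 ∈ V 4 := by
    have hm := mem_bracketSpan' (A := V 1) (B := V 3) hx he3V3
    rw [hbr 3 (by omega)] at hm
    have : ⁅x, e 3⁆ = e 4 := by
      rw [hxe]
      simp only [sub_lie, lie_sub, add_lie, lie_add, smul_lie, lie_smul, lie_self,
        h12, h13, h14, h23, h15, h24, h25, h34, h35, h45,
        h21, h31, h41, h32, h51, h42, h52, h43, h53, h54,
        smul_zero, smul_neg, add_zero, zero_add, sub_zero, zero_sub]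
      try module
    rwa [this] at hm
  -- V 3 and V 4 are disjoint, so e 4 = 0, contradiction
  have hdisj : Disjoint (V 3) (V 4) :=
    hInt.submodule_iSupIndep.pairwiseDisjoint (by norm_num : (3 : ℕ) ≠ 4)
  have : e 4 = 0 := by
    have := hdisj.le_bot ⟨he4V3, he4V4⟩
    simpa using this
  exact e.ne_zero 4 this
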